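/- For every integer d ≥ 1 there exists a 2d-regular bipartite graph G(U,V;E) with 3d vertices on each side such that for every permutation π of V there exists a permutation σ of U for which the greedy matching M[σ,π] leaves at least d/3 vertices of V unmatched; that is, ρ(G) ≤ 8/9. -/

import Mathlib

/-- Auxiliary greedy process: process the list of left vertices in order; each is
matched to its unmatched neighbor of lowest rank under `π` (if any). -/
def greedyAux {U V : Type*} [Fintype V] [DecidableEq V] {n : ℕ}
    (E : U → V → Bool) (π : V ≃ Fin n) :
    List U → Finset V → List (U × V)
  | [], _ => []
  | u :: us, matched =>
    let cand := (Finset.univ.filter (fun v => E u v = true ∧ v ∉ matched)).image π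
    if h : cand.Nonempty then
      (u, π.symm (cand.min' h)) :: greedyAux E π us (insert (π.symm (cand.min' h)) matched)
    else
      greedyAux E π us matched

/-- The greedy matching `M[σ,π]`: vertices of `U` arrive in the order given by `σ`,
each matched to its lowest-ranked (under `π`) yet-unmatched neighbor. -/
def greedy {U V : Type*} [Fintype V] [DecidableEq V] {m n : ℕ}
    (E : U → V → Bool) (σ : U ≃ Fin m) (π : V ≃ Fin n) : List (U × V) :=
  greedyAux E π ((List.finRange m).map σ.symm) ∅

namespace RUB

variable {U V : Type*} [Fintype V] [DecidableEq V] {n : ℕ}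

def endState (E : U → V → Bool) (π : V ≃ Fin n) :
    List U → Finset V → Finset V
  | [], matched => matched
  | u :: us, matched =>
    let cand := (Finset.univ.filter (fun v => E u v = true ∧ v ∉ matched)).image π
    if h : cand.Nonempty then
      endState E π us (insert (π.symm (cand.min' h)) matched)
    else
      endState E π us matched

lemma greedyAux_append (E : U → V → Bool) (π : V ≃ Fin n) (l1 l2 : List U) (m : Finset V) :
    greedyAux E π (l1 ++ l2) m = greedyAux E π l1 m ++ greedyAux E π l2 (endState E π l1 m) := by
  induction l1 generalizing m with
  | nil => simp [greedyAux, endState]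
  | cons u us ih =>
    simp only [List.cons_append, greedyAux, endState]
    split <;> simp [ih]

lemma greedyAux_length_le (E : U → V → Bool) (π : V ≃ Fin n) (l : List U) (m : Finset V) :
    (greedyAux E π l m).length ≤ l.length := by
  induction l generalizing m with
  | nil => simp [greedyAux]
  | cons u us ih =>
    simp only [greedyAux]
    split
    · simpa using Nat.succ_le_succ (ih _)
    · exact le_trans (ih _) (Nat.le_succ _)

lemma greedyAux_length_bound (E : U → V → Bool) (π : V ≃ Fin n) (S : Finset V)
    (l : List U) (m : Finset V) (hm : m ⊆ S)
    (hl : ∀ u ∈ l, ∀ v, E u v = true → v ∈ S) :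
    (greedyAux E π l m).length + m.card ≤ S.card := by
  induction l generalizing m with
  | nil => simpa [greedyAux] using Finset.card_le_card hm
  | cons u us ih =>
    simp only [greedyAux]
    split
    · rename_i h
      obtain ⟨r, hr⟩ := h
      -- the matched vertex
      set w := π.symm ((((Finset.univ.filter (fun v => E u v = true ∧ v ∉ m))).image π).min' ⟨r, hr⟩) with hw
      have hmin : (((Finset.univ.filter (fun v => E u v = true ∧ v ∉ m))).image π).min' ⟨r, hr⟩ ∈
          ((Finset.univ.filter (fun v => E u v = true ∧ v ∉ m))).image π := Finset.min'_mem _ _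
      obtain ⟨v, hv, hπv⟩ := Finset.mem_image.mp hmin
      have hvw : w = v := by rw [hw, ← hπv]; exact π.symm_apply_apply v
      simp only [Finset.mem_filter] at hv
      have hwS : w ∈ S := hvw ▸ hl u (by simp) v hv.2.1
      have hwm : w ∉ m := hvw ▸ hv.2.2
      have h2 : insert w m ⊆ S := Finset.insert_subset hwS hm
      have := ih (insert w m) h2 (fun u' hu' => hl u' (by simp [hu']))
      rw [Finset.card_insert_of_notMem hwm] at this
      simpa using by omega
    · have := ih m hm (fun u' hu' => hl u' (by simp [hu']))
      omega


def prefixSet (π : V ≃ Fin n) (m : ℕ) : Finset V :=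
  Finset.univ.filter (fun v => (π v : ℕ) < m)

lemma prefixSet_zero (π : V ≃ Fin n) : prefixSet π 0 = ∅ := by
  simp [prefixSet]

lemma endState_prefix (E : U → V → Bool) (π : V ≃ Fin n) :
    ∀ (l : List U) (m : ℕ), m + l.length ≤ n →
    (∀ (idx : ℕ) (h : idx < l.length) (hm : m + idx < n),
      E (l.get ⟨idx, h⟩) (π.symm ⟨m + idx, hm⟩) = true) →
    endState E π l (prefixSet π m) = prefixSet π (m + l.length)
  | [], m, _, _ => by simp [endState]
  | u :: us, m, hlen, hE => by
    have hmn : m < n := by simp at hlen; omega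
    have hEu : E u (π.symm ⟨m, hmn⟩) = true := by
      have := hE 0 (by simp) (by omega)
      simpa using this
    set v0 : V := π.symm ⟨m, hmn⟩ with hv0
    have hπv0 : π v0 = ⟨m, hmn⟩ := π.apply_symm_apply _
    set cand := (Finset.univ.filter (fun v => E u v = true ∧ v ∉ prefixSet π m)).image π with hcand
    have hv0mem : (⟨m, hmn⟩ : Fin n) ∈ cand := by
      rw [hcand]
      apply Finset.mem_image.mpr
      exact ⟨v0, by simp [Finset.mem_filter, hEu, prefixSet, hπv0], hπv0⟩
    have hne : cand.Nonempty := ⟨_, hv0mem⟩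
    have hminm : cand.min' hne = ⟨m, hmn⟩ := by
      apply le_antisymm (Finset.min'_le _ _ hv0mem)
      obtain ⟨v, hv, hπv⟩ := Finset.mem_image.mp (Finset.min'_mem cand hne)
      simp only [Finset.mem_filter, Finset.mem_univ, true_and] at hv
      have hge : m ≤ (π v : ℕ) := by
        by_contra hcon
        exact hv.2 (by simp only [prefixSet, Finset.mem_filter, Finset.mem_univ, true_and]; omega)
      rw [← hπv]
      exact Fin.mk_le_mk.mpr hge
    have hins : insert (π.symm (cand.min' hne)) (prefixSet π m) = prefixSet π (m + 1) := by
      rw [hminm]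
      ext v
      simp only [Finset.mem_insert, prefixSet, Finset.mem_filter, Finset.mem_univ, true_and]
      constructor
      · rintro (rfl | h)
        · simp [hπv0]
        · omega
      · intro h
        rcases Nat.lt_or_ge (π v : ℕ) m with h' | h'
        · exact Or.inr h'
        · left
          have hfe : π v = ⟨m, hmn⟩ := by apply Fin.ext; show (π v : ℕ) = m; omega
          rw [← hfe]; exact (π.symm_apply_apply v).symm
    show endState E π (u :: us) (prefixSet π m) = _
    rw [endState]
    simp only [← hcand]
    rw [dif_pos hne, hins]
    have hrec := endState_prefix E π us (m + 1) (by simp at hlen ⊢; omega)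
      (fun idx h hm' => by
        have hm2 : m + (idx + 1) < n := by omega
        have h2 : idx + 1 < (u :: us).length := by simp; omega
        have := hE (idx + 1) h2 hm2
        simp only [List.get_cons_succ] at this
        have hfin : (⟨m + 1 + idx, hm'⟩ : Fin n) = ⟨m + (idx + 1), hm2⟩ := by apply Fin.ext; show m + 1 + idx = m + (idx + 1); omega
        rw [hfin]
        exact this)
    rw [hrec]
    have : m + 1 + us.length = m + (u :: us).length := by simp; omega
    rw [this]



def sched (j k : ℕ) : List ℕ → ℕ → ℕ → List ℕ
  | [], _, _ => []
  | b :: bs, rj, rk =>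
    if b = j then k :: sched j k bs rj (rk - 1)
    else if b = k then j :: sched j k bs (rj - 1) rk
    else if bs.count k < rj then j :: sched j k bs (rj - 1) rk
    else k :: sched j k bs rj (rk - 1)

lemma two_count_le {j k : ℕ} (hjk : j ≠ k) (l : List ℕ) :
    l.count j + l.count k ≤ l.length := by
  induction l with
  | nil => simp
  | cons b bs ih =>
    by_cases hb : b = j
    · rw [hb, List.count_cons_self, List.count_cons_of_ne hjk]
      simp only [List.length_cons]; omega
    · by_cases hb' : b = k
      · rw [hb', List.count_cons_self, List.count_cons_of_ne (Ne.symm hjk)]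
        simp only [List.length_cons]; omega
      · rw [List.count_cons_of_ne hb, List.count_cons_of_ne hb']
        simp only [List.length_cons]; omega

lemma sched_spec {j k : ℕ} (hjk : j ≠ k) :
    ∀ (bs : List ℕ) (rj rk : ℕ), rj + rk = bs.length →
      bs.count k ≤ rj → bs.count j ≤ rk →
      (sched j k bs rj rk).count j = rj ∧ (sched j k bs rj rk).count k = rk ∧
      List.Forall₂ (fun b c => c ≠ b ∧ (c = j ∨ c = k)) bs (sched j k bs rj rk)
  | [], rj, rk, hlen, _, _ => by
    have h0 : rj = 0 ∧ rk = 0 := by simp at hlen; omega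
    simp [sched, h0.1, h0.2]
  | b :: bs, rj, rk, hlen, hck, hcj => by
    simp only [List.length_cons] at hlen
    by_cases hb : b = j
    · rw [hb] at hck hcj
      rw [List.count_cons_self] at hcj
      rw [List.count_cons_of_ne hjk] at hck
      obtain ⟨h1, h2, h3⟩ := sched_spec hjk bs rj (rk - 1) (by omega) hck (by omega)
      rw [sched, if_pos hb]
      refine ⟨?_, ?_, ?_⟩
      · rw [List.count_cons_of_ne (Ne.symm hjk)]; exact h1
      · rw [List.count_cons_self]; omega
      · exact List.Forall₂.cons ⟨by rw [hb]; exact Ne.symm hjk, Or.inr rfl⟩ h3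
    · by_cases hb' : b = k
      · rw [hb'] at hck hcj
        rw [List.count_cons_self] at hck
        rw [List.count_cons_of_ne (Ne.symm hjk)] at hcj
        obtain ⟨h1, h2, h3⟩ := sched_spec hjk bs (rj - 1) rk (by omega) (by omega) hcj
        rw [sched, if_neg hb, if_pos hb']
        refine ⟨?_, ?_, ?_⟩
        · rw [List.count_cons_self]; omega
        · rw [List.count_cons_of_ne hjk]; exact h2
        · exact List.Forall₂.cons ⟨by rw [hb']; exact hjk, Or.inl rfl⟩ h3
      · rw [List.count_cons_of_ne hb'] at hck
        rw [List.count_cons_of_ne hb] at hcj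
        by_cases hbr : bs.count k < rj
        · obtain ⟨h1, h2, h3⟩ := sched_spec hjk bs (rj - 1) rk (by omega) (by omega) hcj
          rw [sched, if_neg hb, if_neg hb', if_pos hbr]
          refine ⟨?_, ?_, ?_⟩
          · rw [List.count_cons_self]; omega
          · rw [List.count_cons_of_ne hjk]; exact h2
          · exact List.Forall₂.cons ⟨fun h => hb h.symm, Or.inl rfl⟩ h3
        · have hkr : bs.count k = rj := by omega
          have hsum := two_count_le hjk bs
          have hrk : 1 ≤ rk := by omega
          obtain ⟨h1, h2, h3⟩ := sched_spec hjk bs rj (rk - 1) (by omega) (by omega) (by omega)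
          rw [sched, if_neg hb, if_neg hb', if_neg hbr]
          refine ⟨?_, ?_, ?_⟩
          · rw [List.count_cons_of_ne (Ne.symm hjk)]; exact h1
          · rw [List.count_cons_self]; omega
          · exact List.Forall₂.cons ⟨fun h => hb' h.symm, Or.inr rfl⟩ h3

def verts {α : Type*} [Inhabited α] (j : ℕ) : List ℕ → List α → List α → List α
  | [], _, _ => []
  | c :: cs, jl, kl =>
    if c = j then jl.headI :: verts j cs jl.tail kl
    else kl.headI :: verts j cs jl kl.tail

lemma verts_spec {α : Type*} [Inhabited α] {j k : ℕ} (P : α → ℕ) :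
    ∀ (cs : List ℕ) (jl kl : List α),
      cs.count j = jl.length → cs.length = jl.length + kl.length →
      (∀ x ∈ jl, P x = j) → (∀ x ∈ kl, P x = k) →
      (verts j cs jl kl).Perm (jl ++ kl) ∧
      List.Forall₂ (fun c u => (c = j ∨ c = k) → P u = c) cs (verts j cs jl kl)
  | [], jl, kl, hc, hlen, _, _ => by
    have hj0 : jl = [] := List.length_eq_zero_iff.mp (by simp at hc; omega)
    subst hj0
    have hk0 : kl = [] := List.length_eq_zero_iff.mp (by simp at hlen; omega)
    subst hk0
    simp [verts]
  | c :: cs, jl, kl, hc, hlen, hj, hk => by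
    simp only [List.length_cons] at hlen
    by_cases hcj : c = j
    · rw [hcj, List.count_cons_self] at hc
      match jl, hc with
      | x :: jl', hc =>
        simp only [List.length_cons] at hc hlen
        obtain ⟨hperm, hfa⟩ := verts_spec P cs jl' kl (by omega)
          (by omega) (fun y hy => hj y (by simp [hy])) hk
        rw [verts, if_pos hcj]
        constructor
        · simpa using hperm.cons x
        · exact List.Forall₂.cons (fun _ => by rw [hcj]; exact hj x (by simp)) hfa
    · rw [List.count_cons_of_ne hcj] at hc
      have hklen : 1 ≤ kl.length := by
        have := List.count_le_length (a := j) (l := cs)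
        omega
      match kl, hklen with
      | y :: kl', _ =>
        simp only [List.length_cons] at hlen
        obtain ⟨hperm, hfa⟩ := verts_spec P cs jl kl' hc (by omega) hj
          (fun z hz => hk z (by simp [hz]))
        rw [verts, if_neg hcj]
        constructor
        · simp only [List.headI, List.tail]
          exact (hperm.cons y).trans List.perm_middle.symm
        · refine List.Forall₂.cons (fun hck => ?_) hfa
          rcases hck with h | h
          · exact absurd h hcj
          · rw [h]; exact hk y (by simp)

lemma countP_le_card {N : ℕ} (q : Fin N → Bool) {β : Type*} [DecidableEq β]
    (g : Fin N → β) (ginj : Function.Injective g) (T : Finset β)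
    (h : ∀ m, q m = true → g m ∈ T) :
    (List.finRange N).countP q ≤ T.card := by
  rw [List.countP_eq_length_filter]
  have hnd : ((List.finRange N).filter q).Nodup :=
    (List.nodup_finRange N).filter q
  rw [← List.toFinset_card_of_nodup hnd]
  apply Finset.card_le_card_of_injOn g (fun x hx => ?_) (ginj.injOn)
  rw [Finset.mem_coe, List.mem_toFinset, List.mem_filter] at hx
  exact h x hx.2



lemma card_blk (d : ℕ) (hd : 1 ≤ d) (c : ℕ) (hc : c < 3) :
    (Finset.univ.filter (fun v : Fin (3 * d) => v.val / d = c)).card = d := by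
  have h := Finset.card_nbij' (s := Finset.univ.filter (fun v : Fin (3 * d) => v.val / d = c))
    (t := Finset.Ico (c * d) (c * d + d))
    (i := Fin.val) (j := fun x => ⟨x % (3 * d), Nat.mod_lt _ (by omega)⟩)
    (hi := ?_) (hj := ?_) (left_inv := ?_) (right_inv := ?_)
  · rw [h, Nat.card_Ico]; omega
  · intro v hv
    rw [Finset.mem_coe, Finset.mem_filter] at hv
    have h1 := Nat.div_add_mod v.val d
    have h2 : v.val % d < d := Nat.mod_lt _ (by omega)
    rw [hv.2] at h1
    rw [Finset.mem_coe, Finset.mem_Ico]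
    interval_cases c <;> omega
  · intro x hx
    rw [Finset.mem_coe, Finset.mem_Ico] at hx
    have hx3 : x < 3 * d := by interval_cases c <;> omega
    rw [Finset.mem_coe, Finset.mem_filter]
    refine ⟨Finset.mem_univ _, ?_⟩
    simp only [Nat.mod_eq_of_lt hx3]
    exact Nat.div_eq_of_lt_le (by omega) (by interval_cases c <;> omega)
  · intro v hv; apply Fin.ext; simp [Nat.mod_eq_of_lt v.isLt]
  · intro x hx
    rw [Finset.mem_coe, Finset.mem_Ico] at hx
    have hx3 : x < 3 * d := by interval_cases c <;> omega
    simp [Nat.mod_eq_of_lt hx3]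

lemma card_prefix {n : ℕ} (π : Equiv.Perm (Fin n)) (m : ℕ) (hm : m ≤ n) :
    (Finset.univ.filter (fun v => ((π v : Fin n) : ℕ) < m)).card = m := by
  rcases Nat.eq_zero_or_pos n with rfl | hn
  · simp only [Nat.le_zero] at hm
    subst hm
    simp
  have h := Finset.card_nbij' (s := Finset.univ.filter (fun v => ((π v : Fin n) : ℕ) < m))
    (t := Finset.range m)
    (i := fun v => ((π v : Fin n) : ℕ)) (j := fun x => π.symm ⟨x % n, Nat.mod_lt _ hn⟩)
    (hi := ?_) (hj := ?_) (left_inv := ?_) (right_inv := ?_)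
  · rw [h, Finset.card_range]
  · intro v hv
    rw [Finset.mem_coe, Finset.mem_filter] at hv
    rw [Finset.mem_coe, Finset.mem_range]
    exact hv.2
  · intro x hx
    rw [Finset.mem_coe, Finset.mem_range] at hx
    rw [Finset.mem_coe, Finset.mem_filter]
    refine ⟨Finset.mem_univ _, ?_⟩
    rw [Equiv.apply_symm_apply]
    simpa [Nat.mod_eq_of_lt (lt_of_lt_of_le hx hm)] using hx
  · intro v hv
    rw [Finset.mem_coe, Finset.mem_filter] at hv
    beta_reduce
    have : (⟨((π v : Fin n) : ℕ) % n, Nat.mod_lt _ hn⟩ : Fin n) = π v := by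
      apply Fin.ext
      simp [Nat.mod_eq_of_lt (π v).isLt]
    rw [this, Equiv.symm_apply_apply]
  · intro x hx
    rw [Finset.mem_coe, Finset.mem_range] at hx
    beta_reduce
    rw [Equiv.apply_symm_apply]
    simp [Nat.mod_eq_of_lt (lt_of_lt_of_le hx hm)]


lemma main (d : ℕ) (hd : 1 ≤ d) (π : Equiv.Perm (Fin (3 * d))) (i j k : ℕ)
    (hi3 : i < 3) (hj3 : j < 3) (hk3 : k < 3) (hij : i ≠ j) (hik : i ≠ k) (hjk : j ≠ k) :
    ∃ σ : Equiv.Perm (Fin (3 * d)),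
      (greedy (fun u v : Fin (3 * d) => decide (u.val / d ≠ v.val / d)) σ π).length
        + (Finset.univ.filter
            (fun v : Fin (3 * d) => v.val / d = i ∧ 2 * d ≤ (π v : ℕ))).card ≤ 3 * d := by
  letI : Inhabited (Fin (3 * d)) := ⟨⟨0, by omega⟩⟩
  set E : Fin (3 * d) → Fin (3 * d) → Bool :=
    fun u v => decide (u.val / d ≠ v.val / d) with hE
  -- the three blocks as sorted lists
  set jl := ((Finset.univ.filter (fun v : Fin (3 * d) => v.val / d = j)).sort (· ≤ ·)) with hjl
  set kl := ((Finset.univ.filter (fun v : Fin (3 * d) => v.val / d = k)).sort (· ≤ ·)) with hkl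
  set il := ((Finset.univ.filter (fun v : Fin (3 * d) => v.val / d = i)).sort (· ≤ ·)) with hil
  have hjl_len : jl.length = d := by rw [hjl, Finset.length_sort, card_blk d hd j hj3]
  have hkl_len : kl.length = d := by rw [hkl, Finset.length_sort, card_blk d hd k hk3]
  have hil_len : il.length = d := by rw [hil, Finset.length_sort, card_blk d hd i hi3]
  have hjl_mem : ∀ x ∈ jl, x.val / d = j := fun x hx =>
    (Finset.mem_filter.mp ((Finset.mem_sort _).mp hx)).2
  have hkl_mem : ∀ x ∈ kl, x.val / d = k := fun x hx =>
    (Finset.mem_filter.mp ((Finset.mem_sort _).mp hx)).2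
  have hil_mem : ∀ x ∈ il, x.val / d = i := fun x hx =>
    (Finset.mem_filter.mp ((Finset.mem_sort _).mp hx)).2
  -- the block labels of the 2d lowest-ranked right vertices
  have h23 : 2 * d ≤ 3 * d := by omega
  set f : Fin (2 * d) → ℕ := fun m => ((π.symm (Fin.castLE h23 m)) : Fin (3 * d)).val / d with hf
  set bs := (List.finRange (2 * d)).map f with hbs
  have hbs_len : bs.length = 2 * d := by simp [hbs]
  have hcount : ∀ c, c < 3 → bs.count c ≤ d := by
    intro c hc
    rw [hbs, List.count_eq_countP, List.countP_map]
    have := countP_le_card ((fun x => x == c) ∘ f)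
      (g := fun m : Fin (2 * d) => π.symm (Fin.castLE h23 m))
      ((Equiv.injective π.symm).comp (Fin.castLE_injective h23))
      (Finset.univ.filter (fun v : Fin (3 * d) => v.val / d = c))
      (fun m hm => by
        rw [Finset.mem_filter]
        refine ⟨Finset.mem_univ _, ?_⟩
        have : f m = c := by simpa using hm
        exact this)
    rw [card_blk d hd c hc] at this
    exact this
  -- schedule of U-blocks for the first 2d steps
  set cs := sched j k bs d d with hcs
  obtain ⟨hcs_j, hcs_k, hcs_fa⟩ :=
    sched_spec hjk bs d d (by rw [hbs_len]; omega) (hcount k hk3) (hcount j hj3)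
  have hcs_len : cs.length = 2 * d := by rw [← hcs_fa.length_eq, hbs_len]
  -- realize the schedule with actual vertices
  obtain ⟨hperm12, hfa12⟩ := verts_spec (k := k) (fun u : Fin (3 * d) => u.val / d) cs jl kl
    (by rw [hcs_j, hjl_len]) (by rw [hcs_len, hjl_len, hkl_len]; omega) hjl_mem hkl_mem
  set L12 := verts j cs jl kl with hL12
  have hL12_len : L12.length = 2 * d := by
    rw [hperm12.length_eq, List.length_append, hjl_len, hkl_len]; omega
  set LU := L12 ++ il with hLU
  have hLU_len : LU.length = 3 * d := by
    rw [hLU, List.length_append, hL12_len, hil_len]; omega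
  -- LU is a permutation of all of U
  have hdisjk : jl.Disjoint kl := by
    intro x hxj hxk
    exact hjk ((hjl_mem x hxj).symm.trans (hkl_mem x hxk))
  have hjknd : (jl ++ kl).Nodup := by
    rw [List.nodup_append]
    exact ⟨Finset.sort_nodup _ _, Finset.sort_nodup _ _, fun a ha b hb hab => hdisjk ha (by subst hab; exact hb)⟩
  have hLU_nodup : LU.Nodup := by
    rw [hLU, List.nodup_append]
    refine ⟨(hperm12.nodup_iff).mpr hjknd, Finset.sort_nodup _ _, ?_⟩
    intro x hx y hxi hxy; subst hxy
    have hx' : x ∈ jl ++ kl := (hperm12.mem_iff).mp hx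
    have hbi : x.val / d = i := hil_mem x hxi
    rcases List.mem_append.mp hx' with h | h
    · exact hij (hbi.symm.trans (hjl_mem x h))
    · exact hik (hbi.symm.trans (hkl_mem x h))
  have hLU_mem : ∀ x : Fin (3 * d), x ∈ LU := by
    intro x
    have hx3 : x.val / d < 3 := Nat.div_lt_of_lt_mul (by omega)
    have : x.val / d = i ∨ x.val / d = j ∨ x.val / d = k := by
      generalize hgen : x.val / d = bx at hx3
      omega
    rw [hLU, List.mem_append]
    rcases this with h | h | h
    · exact Or.inr ((Finset.mem_sort _).mpr (Finset.mem_filter.mpr ⟨Finset.mem_univ _, h⟩))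
    · exact Or.inl ((hperm12.mem_iff).mpr (List.mem_append.mpr (Or.inl
        ((Finset.mem_sort _).mpr (Finset.mem_filter.mpr ⟨Finset.mem_univ _, h⟩)))))
    · exact Or.inl ((hperm12.mem_iff).mpr (List.mem_append.mpr (Or.inr
        ((Finset.mem_sort _).mpr (Finset.mem_filter.mpr ⟨Finset.mem_univ _, h⟩)))))
  -- build σ
  set e := List.Nodup.getEquivOfForallMemList LU hLU_nodup hLU_mem with he
  refine ⟨((finCongr hLU_len.symm).trans e).symm, ?_⟩
  have hmap : (List.finRange (3 * d)).map ((finCongr hLU_len.symm).trans e).symm.symm = LU := by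
    apply List.ext_get (by simp [hLU_len])
    intro idx h1 h2
    simp only [List.get_eq_getElem, List.getElem_map, List.getElem_finRange, Equiv.symm_symm, Equiv.trans_apply,
      finCongr_apply, he, List.Nodup.getEquivOfForallMemList_apply]
    congr 1
  rw [greedy, hmap, hLU, greedyAux_append]
  -- phase 1+2: greedy matches exactly the 2d lowest-ranked vertices
  have hfa12' := List.forall₂_iff_get.mp hfa12
  have hcs_fa' := List.forall₂_iff_get.mp hcs_fa
  have hend : endState E π L12 ∅ = prefixSet π (2 * d) := by
    have h0 : (∅ : Finset (Fin (3 * d))) = prefixSet π 0 := (prefixSet_zero π).symm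
    rw [h0]
    have := endState_prefix E π L12 0 (by rw [hL12_len]; omega) ?_
    · rw [this]; congr 1; omega
    intro idx h hm
    have hidx2 : idx < 2 * d := by rw [hL12_len] at h; exact h
    have hidxcs : idx < cs.length := by rw [hcs_len]; exact hidx2
    have hidxbs : idx < bs.length := by rw [hbs_len]; exact hidx2
    have hc := hfa12'.2 idx hidxcs h
    have hb := hcs_fa'.2 idx hidxbs hidxcs
    -- hb : cs.get ≠ bs.get ∧ (cs.get = j ∨ cs.get = k)
    have hLblk : (L12.get ⟨idx, h⟩).val / d = cs.get ⟨idx, hidxcs⟩ := hc hb.2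
    have hbsval : bs.get ⟨idx, hidxbs⟩ = (π.symm ⟨0 + idx, hm⟩ : Fin (3 * d)).val / d := by
      show (List.map f (List.finRange (2 * d))).get ⟨idx, hidxbs⟩ = _
      simp only [List.get_eq_getElem, List.getElem_map, List.getElem_finRange, hf]
      have hcast : Fin.castLE h23 (Fin.cast (by simp) (⟨idx, by simpa using hidx2⟩ : Fin ((List.finRange (2*d)).length))) = (⟨0 + idx, hm⟩ : Fin (3 * d)) := by
        apply Fin.ext
        show (idx : ℕ) = 0 + idx
        omega
      rw [hcast]
    rw [hE]
    apply decide_eq_true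
    rw [hLblk, ← hbsval]
    exact fun hcon => hb.1 (hcon)
  rw [hend]
  -- phase 3 bound
  set T := Finset.univ.filter (fun v : Fin (3 * d) => v.val / d = i ∧ 2 * d ≤ (π v : ℕ)) with hT
  set S := (Finset.univ.filter (fun v : Fin (3 * d) => ¬ (v.val / d = i))) ∪ prefixSet π (2 * d)
    with hS
  have hScompl : Sᶜ = T := by
    ext v
    simp only [hS, hT, Finset.mem_compl, Finset.mem_union, Finset.mem_filter, Finset.mem_univ,
      true_and, prefixSet, not_or]
    constructor
    · intro hv; omega
    · intro hv; omega
  have hScard : S.card + T.card = 3 * d := by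
    have := Finset.card_add_card_compl S
    rw [hScompl, Fintype.card_fin] at this
    exact this
  have hpre_card : (prefixSet π (2 * d)).card = 2 * d := card_prefix π (2 * d) (by omega)
  have hlen3 := greedyAux_length_bound E π S il (prefixSet π (2 * d))
    Finset.subset_union_right
    (fun u hu v hEv => by
      have hbu : u.val / d = i := hil_mem u hu
      have : u.val / d ≠ v.val / d := of_decide_eq_true hEv
      rw [hS]
      apply Finset.mem_union_left
      rw [Finset.mem_filter]
      exact ⟨Finset.mem_univ _, fun hcon => this (hbu.trans hcon.symm)⟩)
  rw [hpre_card] at hlen3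
  have hlen1 : (greedyAux E π L12 ∅).length ≤ 2 * d := by
    have := greedyAux_length_le E π L12 ∅
    rw [hL12_len] at this
    exact this
  rw [List.length_append]
  omega

end RUB

namespace RUB
lemma tsplit (d : ℕ) (hd : 1 ≤ d) (π : Equiv.Perm (Fin (3 * d))) :
    (Finset.univ.filter (fun v : Fin (3 * d) => v.val / d = 0 ∧ 2 * d ≤ (π v : ℕ))).card
    + (Finset.univ.filter (fun v : Fin (3 * d) => v.val / d = 1 ∧ 2 * d ≤ (π v : ℕ))).card
    + (Finset.univ.filter (fun v : Fin (3 * d) => v.val / d = 2 ∧ 2 * d ≤ (π v : ℕ))).card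
    = d := by
  set A := Finset.univ.filter (fun v : Fin (3 * d) => 2 * d ≤ (π v : ℕ)) with hA
  have hAcard : A.card = d := by
    have h1 := Finset.card_filter_add_card_filter_not
      (s := (Finset.univ : Finset (Fin (3 * d)))) (p := fun v => (π v : ℕ) < 2 * d)
    rw [card_prefix π (2 * d) (by omega)] at h1
    have h2 : Finset.univ.filter (fun v : Fin (3 * d) => ¬ ((π v : ℕ) < 2 * d)) = A := by
      ext v; simp [hA, not_lt]
    rw [h2, Finset.card_univ, Fintype.card_fin] at h1
    omega
  have hte : ∀ c : ℕ, Finset.univ.filter (fun v : Fin (3 * d) => v.val / d = c ∧ 2 * d ≤ (π v : ℕ))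
      = A.filter (fun v => v.val / d = c) := by
    intro c
    ext v
    simp only [Finset.mem_filter, Finset.mem_univ, true_and, hA]
    tauto
  have s0 := Finset.card_filter_add_card_filter_not
    (s := A) (p := fun v : Fin (3 * d) => v.val / d = 0)
  have s1 := Finset.card_filter_add_card_filter_not
    (s := A.filter (fun v : Fin (3 * d) => ¬ (v.val / d = 0)))
    (p := fun v : Fin (3 * d) => v.val / d = 1)
  have e1 : (A.filter (fun v : Fin (3 * d) => ¬ (v.val / d = 0))).filter
      (fun v : Fin (3 * d) => v.val / d = 1) = A.filter (fun v => v.val / d = 1) := by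
    ext v
    simp only [Finset.mem_filter]
    constructor
    · rintro ⟨⟨h1, _⟩, h3⟩; exact ⟨h1, h3⟩
    · rintro ⟨h1, h2⟩; exact ⟨⟨h1, by omega⟩, h2⟩
  have e2 : (A.filter (fun v : Fin (3 * d) => ¬ (v.val / d = 0))).filter
      (fun v : Fin (3 * d) => ¬ (v.val / d = 1)) = A.filter (fun v => v.val / d = 2) := by
    ext v
    simp only [Finset.mem_filter]
    have hx3 : v.val / d < 3 := Nat.div_lt_of_lt_mul (by omega)
    constructor
    · rintro ⟨⟨h1, h2⟩, h3⟩
      refine ⟨h1, ?_⟩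
      generalize hgen : v.val / d = bx at hx3 h2 h3
      omega
    · rintro ⟨h1, h2⟩
      refine ⟨⟨h1, by omega⟩, by omega⟩
  rw [hte 0, hte 1, hte 2]
  rw [e1, e2] at s1
  omega

end RUB


/-- For every `d ≥ 1` there is a `2d`-regular bipartite graph with `3d` vertices
on each side such that for every permutation `π` of `V` some permutation `σ` of `U`
makes the greedy matching leave at least `d/3` vertices of `V` unmatched
(so `ρ(G) ≤ 8/9`). -/

theorem regular_upper_bound (d : ℕ) (hd : 1 ≤ d) :
    ∃ E : Fin (3 * d) → Fin (3 * d) → Bool,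
      (∀ u, (Finset.univ.filter (fun v => E u v = true)).card = 2 * d) ∧
      (∀ v, (Finset.univ.filter (fun u => E u v = true)).card = 2 * d) ∧
      ∀ π : Equiv.Perm (Fin (3 * d)), ∃ σ : Equiv.Perm (Fin (3 * d)),
        d ≤ 3 * (3 * d - (greedy E σ π).length) := by
  refine ⟨fun u v : Fin (3 * d) => decide (u.val / d ≠ v.val / d), ?_, ?_, ?_⟩
  · intro u
    have hu3 : u.val / d < 3 := Nat.div_lt_of_lt_mul (by omega)
    have h1 := Finset.card_filter_add_card_filter_not
      (s := (Finset.univ : Finset (Fin (3 * d)))) (p := fun v => v.val / d = u.val / d)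
    rw [RUB.card_blk d hd (u.val / d) hu3, Finset.card_univ, Fintype.card_fin] at h1
    have h2 : Finset.univ.filter (fun v : Fin (3 * d) => decide (u.val / d ≠ v.val / d) = true)
        = Finset.univ.filter (fun v : Fin (3 * d) => ¬ (v.val / d = u.val / d)) := by
      ext v
      simp only [Finset.mem_filter, Finset.mem_univ, true_and, decide_eq_true_eq]
      exact ne_comm
    rw [h2]
    omega
  · intro v
    have hv3 : v.val / d < 3 := Nat.div_lt_of_lt_mul (by omega)
    have h1 := Finset.card_filter_add_card_filter_not
      (s := (Finset.univ : Finset (Fin (3 * d)))) (p := fun u => u.val / d = v.val / d)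
    rw [RUB.card_blk d hd (v.val / d) hv3, Finset.card_univ, Fintype.card_fin] at h1
    have h2 : Finset.univ.filter (fun u : Fin (3 * d) => decide (u.val / d ≠ v.val / d) = true)
        = Finset.univ.filter (fun u : Fin (3 * d) => ¬ (u.val / d = v.val / d)) := by
      ext u
      simp only [Finset.mem_filter, Finset.mem_univ, true_and, decide_eq_true_eq]
    rw [h2]
    omega
  · intro π
    have hsum := RUB.tsplit d hd π
    have hmax : d ≤ 3 * (Finset.univ.filter
          (fun v : Fin (3 * d) => v.val / d = 0 ∧ 2 * d ≤ (π v : ℕ))).card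
        ∨ d ≤ 3 * (Finset.univ.filter
          (fun v : Fin (3 * d) => v.val / d = 1 ∧ 2 * d ≤ (π v : ℕ))).card
        ∨ d ≤ 3 * (Finset.univ.filter
          (fun v : Fin (3 * d) => v.val / d = 2 ∧ 2 * d ≤ (π v : ℕ))).card := by
      omega
    rcases hmax with hm | hm | hm
    · obtain ⟨σ, hσ⟩ := RUB.main d hd π 0 1 2 (by omega) (by omega) (by omega)
        (by omega) (by omega) (by omega)
      exact ⟨σ, by omega⟩
    · obtain ⟨σ, hσ⟩ := RUB.main d hd π 1 0 2 (by omega) (by omega) (by omega)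
        (by omega) (by omega) (by omega)
      exact ⟨σ, by omega⟩
    · obtain ⟨σ, hσ⟩ := RUB.main d hd π 2 0 1 (by omega) (by omega) (by omega)
        (by omega) (by omega) (by omega)
      exact ⟨σ, by omega⟩
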